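/- Let A ∈ ℂ^{n×m} be nonzero. Then the expected residual after one step of randomly pivoted LU satisfies Σ_{(i,j): A_{ij} ≠ 0} (|A_{ij}|²/‖A‖_F²) · ( A − (1/A_{ij})·A e_j e_i^T A ) = A − (A A* A)/‖A‖_F², where ‖A‖_F² = tr(A*A). -/

import Mathlib

open Matrix Finset

noncomputable def frobSq {n m : ℕ} (A : Matrix (Fin n) (Fin m) ℂ) : ℝ :=
  ∑ i, ∑ j, ‖A i j‖ ^ 2

lemma sandwich {n m : ℕ} (A : Matrix (Fin n) (Fin m) ℂ) (i : Fin n) (j : Fin m)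
    (a : Fin n) (b : Fin m) :
    (A * Matrix.single j i (1 : ℂ) * A) a b = A a j * A i b := by
  simp [Matrix.mul_apply, Matrix.single, ite_and, Finset.mul_sum]

theorem rplu_expected_residual {n m : ℕ} (A : Matrix (Fin n) (Fin m) ℂ) (hA : A ≠ 0) :
    (∑ i : Fin n, ∑ j : Fin m,
      if A i j ≠ 0 then
        (‖A i j‖ ^ 2 / frobSq A) •
          (A - (A i j)⁻¹ • (A * Matrix.single j i (1 : ℂ) * A))
      else 0)
    = A - (frobSq A)⁻¹ • (A * Aᴴ * A) := by
  have hF : frobSq A ≠ 0 := by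
    intro h
    apply hA
    ext i j
    have := (Finset.sum_eq_zero_iff_of_nonneg (fun i _ => Finset.sum_nonneg
      (fun j _ => sq_nonneg ‖A i j‖))).mp h i (Finset.mem_univ i)
    have := (Finset.sum_eq_zero_iff_of_nonneg (fun j _ => sq_nonneg ‖A i j‖)).mp
      this j (Finset.mem_univ j)
    simpa using this
  have hFc : ((frobSq A : ℝ) : ℂ) ≠ 0 := by exact_mod_cast hF
  ext a b
  simp only [Matrix.sum_apply, Matrix.sub_apply, Matrix.smul_apply]
  have key : ∀ i j,
      (if A i j ≠ 0 then
        (‖A i j‖ ^ 2 / frobSq A) •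
          (A - (A i j)⁻¹ • (A * Matrix.single j i (1 : ℂ) * A))
      else 0) a b
      = ((‖A i j‖ ^ 2 / frobSq A : ℝ) : ℂ) * A a b
        - (starRingEnd ℂ (A i j) * (A a j * A i b)) / (frobSq A : ℂ) := by
    intro i j
    have hc : ((‖A i j‖ ^ 2 : ℝ) : ℂ) = A i j * (starRingEnd ℂ) (A i j) := by
      rw [Complex.mul_conj]
      norm_cast
      rw [Complex.normSq_eq_norm_sq]
    by_cases h : A i j = 0
    · simp [h]
    · simp only [h, ne_eq, not_false_iff, if_true, Matrix.smul_apply, Matrix.sub_apply,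
        sandwich, Complex.real_smul, smul_eq_mul]
      push_cast [hc]
      field_simp
  simp only [key, Finset.sum_sub_distrib]
  have h1 : ∑ x : Fin n, ∑ y : Fin m, ((‖A x y‖ ^ 2 / frobSq A : ℝ) : ℂ) * A a b
      = A a b := by
    have hsum : ∑ x : Fin n, ∑ y : Fin m, ((‖A x y‖ ^ 2 / frobSq A : ℝ) : ℂ) = 1 := by
      push_cast
      simp only [div_eq_mul_inv, ← Finset.sum_mul]
      have : ∑ x : Fin n, ∑ y : Fin m, ((‖A x y‖ : ℂ)) ^ 2 = ((frobSq A : ℝ) : ℂ) := by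
        push_cast [frobSq]
        ring
      rw [this, mul_inv_cancel₀ hFc]
    simp only [← Finset.sum_mul, hsum, one_mul]
  have h2 : (A * Aᴴ * A) a b
      = ∑ x : Fin n, ∑ y : Fin m, starRingEnd ℂ (A x y) * (A a y * A x b) := by
    simp only [Matrix.mul_apply, Matrix.conjTranspose_apply, RCLike.star_def,
      Finset.sum_mul]
    refine Finset.sum_congr rfl fun x _ => ?_
    refine Finset.sum_congr rfl fun y _ => ?_
    ring
  rw [h1, h2, Complex.real_smul, Complex.ofReal_inv]
  congr 1
  simp only [div_eq_mul_inv, Finset.mul_sum]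
  refine Finset.sum_congr rfl fun x _ => Finset.sum_congr rfl fun y _ => ?_
  ring
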